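/- arXiv:math/9903204 — 2 statements merged into one kernel-verified Lean document; each statement's English description precedes it below -/
import Mathlib

section
/- Let G be a topological group and let T ⊆ G be a compact connected subset containing the identity. Suppose T is contained in a countable union ⋃_{m∈ℕ} (A + t_m) of translates of a closed subgroup A ⊆ G, where each A + t_m is closed and T is a Baire space. Then T is contained in a single translate A + t_m for some m; moreover, if the identity lies in T, then T ⊆ A. -/
/-- In a countable, nonempty, T1, Baire-ish (compact T2) preconnected space,
everything collapses: a countable compact T2 preconnected space is a subsingleton. -/
theorem aux_subsingleton {X : Type*} [TopologicalSpace X] [Countable X] [CompactSpace X]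
    [T2Space X] [PreconnectedSpace X] : Subsingleton X := by
  rcases isEmpty_or_nonempty X with h | h
  · exact Subsingleton.intro fun a b => (h.false a).elim
  · have hc : ∀ a : X, IsClosed ({a} : Set X) := fun a => isClosed_singleton
    have hU : (⋃ a : X, ({a} : Set X)) = Set.univ := by
      ext x; simp
    obtain ⟨a, ha⟩ := nonempty_interior_of_iUnion_of_closed hc hU
    have hopen : IsOpen ({a} : Set X) := by
      have : interior ({a} : Set X) = {a} := by
        apply Set.Subset.antisymm interior_subset
        intro x hx
        rcases ha with ⟨y, hy⟩
        have hy' : y ∈ ({a} : Set X) := interior_subset hy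
        rcases hy' with rfl
        rcases hx with rfl
        exact hy
      rw [← this]; exact isOpen_interior
    have hclopen : IsClopen ({a} : Set X) := ⟨hc a, hopen⟩
    rcases isClopen_iff.mp hclopen with h1 | h1
    · exact absurd h1 (Set.singleton_nonempty a).ne_empty
    · exact Subsingleton.intro fun x y => by
        have hx : x ∈ ({a} : Set X) := h1 ▸ Set.mem_univ x
        have hy : y ∈ ({a} : Set X) := h1 ▸ Set.mem_univ y
        rw [Set.mem_singleton_iff.mp hx, Set.mem_singleton_iff.mp hy]

/-- A compact connected subset `T` of an (abelian) topological group
containing the identity, which is a Baire space and is covered by countably many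
closed translates `A + t m` of a closed subgroup `A`, is contained in a single
translate; moreover since `0 ∈ T`, `T ⊆ A`. -/
theorem stmt1 {G : Type*} [AddCommGroup G] [TopologicalSpace G] [IsTopologicalAddGroup G]
    (A : AddSubgroup G) (hA : IsClosed (A : Set G)) (t : ℕ → G)
    (T : Set G) (hTcompact : IsCompact T) (hTconn : IsConnected T) (h0 : (0 : G) ∈ T)
    (hclosed : ∀ m, IsClosed ((fun a => a + t m) '' (A : Set G)))
    (hBaire : BaireSpace T)
    (hcover : T ⊆ ⋃ m, (fun a => a + t m) '' (A : Set G)) :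
    (∃ m, T ⊆ (fun a => a + t m) '' (A : Set G)) ∧ T ⊆ (A : Set G) := by
  haveI : IsClosed (A : Set G) := hA
  let q : G → G ⧸ A := QuotientAddGroup.mk
  have hqcont : Continuous q := continuous_quot_mk
  -- image set
  set S : Set (G ⧸ A) := q '' T with hS
  have hScompact : IsCompact S := hTcompact.image hqcont
  have hSconn : IsPreconnected S := (hTconn.image q hqcont.continuousOn).isPreconnected
  -- S is countable
  have hquot : ∀ x ∈ T, ∃ m, q x = q (t m) := by
    intro x hx
    rcases Set.mem_iUnion.mp (hcover hx) with ⟨m, a, ha, hax⟩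
    refine ⟨m, ?_⟩
    rw [← hax]
    refine (QuotientAddGroup.eq).mpr ?_
    simpa using A.neg_mem ha
  have hScount : S.Countable := by
    have : S ⊆ Set.range (fun m => q (t m)) := by
      rintro s ⟨x, hx, rfl⟩
      rcases hquot x hx with ⟨m, hm⟩
      exact ⟨m, hm.symm⟩
    exact (Set.countable_range _).mono this
  -- S is a subsingleton
  have hSsub : S.Subsingleton := by
    rcases S.eq_empty_or_nonempty with h | hne
    · rw [h]; exact Set.subsingleton_empty
    · haveI : Countable S := hScount.to_subtype
      haveI : CompactSpace S := isCompact_iff_compactSpace.mp hScompact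
      haveI : PreconnectedSpace S := Subtype.preconnectedSpace hSconn
      haveI := aux_subsingleton (X := S)
      exact fun x hx y hy => by
        have := Subsingleton.elim (⟨x, hx⟩ : S) ⟨y, hy⟩
        exact congrArg Subtype.val this
  -- 0 ∈ T gives everything in A
  have hTA : T ⊆ (A : Set G) := by
    intro x hx
    have h1 : q x ∈ S := ⟨x, hx, rfl⟩
    have h2 : q 0 ∈ S := ⟨0, h0, rfl⟩
    have h3 : q x = q 0 := hSsub h1 h2
    have : -(0:G) + x ∈ A := (QuotientAddGroup.eq).mp h3.symm
    simpa using this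
  refine ⟨?_, hTA⟩
  -- find m with t m ∈ A
  rcases hquot 0 h0 with ⟨m, hm⟩
  have htm : t m ∈ A := by
    have : -(0:G) + t m ∈ A := (QuotientAddGroup.eq).mp hm
    simpa using this
  refine ⟨m, fun x hx => ?_⟩
  exact ⟨x - t m, A.sub_mem (hTA hx) htm, by simp⟩
end

section
/- Let H be a finite-dimensional complex vector space with a real structure (complex conjugation fixing a real form H_ℝ), and let F ⊆ H be a complex subspace with H = F ⊕ F̄ where F̄ is the conjugate of F. Let 0 → H → E → Q → 0 be an exact sequence of complex vector spaces and suppose s_H : Q → E is a splitting. Then there exists a unique splitting s : Q_ℝ → E (defined on a real form Q_ℝ of Q, assuming E and Q also carry compatible real structures and the sequence is defined over ℝ) such that s is both 'Hodge' modulo F (i.e., s ≡ s_H mod Hom(Q, F)) and real (i.e., s(Q_ℝ) ⊆ E_ℝ). -/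
/-- unique real Hodge splitting, from the proof of Lemma 5: Let
`0 → H → E → Q → 0` be an exact sequence of finite-dimensional complex vector spaces
defined over ℝ (all spaces carry antilinear involutions — real structures — and the
maps commute with them), let `F ⊆ H` be a complex subspace with `H = F ⊕ σ(F)`, and
let `s_H : Q → E` be a splitting.  Then there is a unique splitting `s` of the
sequence which is both Hodge modulo `F` (i.e. `s − s_H` takes values in `F`) and real
(i.e. `s` commutes with the real structures). -/
theorem stmt18 {H E Q : Type*}
    [AddCommGroup H] [Module ℂ H] [FiniteDimensional ℂ H]
    [AddCommGroup E] [Module ℂ E] [FiniteDimensional ℂ E]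
    [AddCommGroup Q] [Module ℂ Q] [FiniteDimensional ℂ Q]
    (σH : H → H) (σE : E → E) (σQ : Q → Q)
    (hHadd : ∀ x y, σH (x + y) = σH x + σH y)
    (hHsmul : ∀ (c : ℂ) x, σH (c • x) = (starRingEnd ℂ c) • σH x)
    (hHinv : ∀ x, σH (σH x) = x)
    (hEadd : ∀ x y, σE (x + y) = σE x + σE y)
    (hEsmul : ∀ (c : ℂ) x, σE (c • x) = (starRingEnd ℂ c) • σE x)
    (hEinv : ∀ x, σE (σE x) = x)
    (hQadd : ∀ x y, σQ (x + y) = σQ x + σQ y)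
    (hQsmul : ∀ (c : ℂ) x, σQ (c • x) = (starRingEnd ℂ c) • σQ x)
    (hQinv : ∀ x, σQ (σQ x) = x)
    (F : Submodule ℂ H)
    (hspan : ∀ v : H, ∃ f ∈ F, ∃ g ∈ F, v = f + σH g)
    (huniq : ∀ f ∈ F, ∀ g ∈ F, f + σH g = 0 → f = 0 ∧ g = 0)
    (i : H →ₗ[ℂ] E) (p : E →ₗ[ℂ] Q)
    (hi : Function.Injective i) (hp : Function.Surjective p)
    (hexact : LinearMap.range i = LinearMap.ker p)
    (hicompat : ∀ x, σE (i x) = i (σH x))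
    (hpcompat : ∀ x, σQ (p x) = p (σE x))
    (sH : Q →ₗ[ℂ] E) (hsH : p ∘ₗ sH = LinearMap.id) :
    ∃! s : Q →ₗ[ℂ] E, p ∘ₗ s = LinearMap.id ∧
      (∀ q : Q, ∃ f ∈ F, s q - sH q = i f) ∧
      (∀ q : Q, σE (s q) = s (σQ q)) := by
  classical
  have hHneg : ∀ x, σH (-x) = -σH x := fun x => by
    simpa using hHsmul (-1) x
  have hHsub : ∀ x y, σH (x - y) = σH x - σH y := fun x y => by
    rw [sub_eq_add_neg, hHadd, hHneg, sub_eq_add_neg]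
  have hEneg : ∀ x, σE (-x) = -σE x := fun x => by
    simpa using hEsmul (-1) x
  have hEsub : ∀ x y, σE (x - y) = σE x - σE y := fun x y => by
    rw [sub_eq_add_neg, hEadd, hEneg, sub_eq_add_neg]
  -- uniqueness of the F ⊕ σH(F) decomposition
  have hdu : ∀ f ∈ F, ∀ g ∈ F, ∀ f' ∈ F, ∀ g' ∈ F,
      f + σH g = f' + σH g' → f = f' ∧ g = g' := by
    intro f hf g hg f' hf' g' hg' h
    have h2 : (f - f') + σH (g - g') = 0 := by
      rw [hHsub, sub_add_sub_comm, h, sub_self]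
    obtain ⟨h3, h4⟩ := huniq _ (F.sub_mem hf hf') _ (F.sub_mem hg hg') h2
    exact ⟨sub_eq_zero.mp h3, sub_eq_zero.mp h4⟩
  choose φ hφ ψ hψ hφψ using hspan
  have hpsH : ∀ q, p (sH q) = q := fun q => by
    simpa using LinearMap.congr_fun hsH q
  -- the conjugate splitting
  obtain ⟨sbar, hsbar⟩ : ∃ sbar : Q →ₗ[ℂ] E, ∀ q, sbar q = σE (sH (σQ q)) :=
    ⟨{ toFun := fun q => σE (sH (σQ q))
       map_add' := fun x y => by rw [hQadd, map_add, hEadd]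
       map_smul' := fun c x => by
         rw [hQsmul, map_smul, hEsmul]; simp }, fun _ => rfl⟩
  have hDker : ∀ q, sbar q - sH q ∈ LinearMap.range i := by
    intro q
    rw [hexact, LinearMap.mem_ker, map_sub, hpsH]
    have h1 : p (sbar q) = q := by
      rw [hsbar, ← hpcompat, hpsH, hQinv]
    rw [h1, sub_self]
  obtain ⟨δ, hiδ⟩ : ∃ δ : Q →ₗ[ℂ] H, ∀ q, i (δ q) = sbar q - sH q := by
    refine ⟨(LinearEquiv.ofInjective i hi).symm.toLinearMap ∘ₗ
      ((sbar - sH).codRestrict (LinearMap.range i) hDker), fun q => ?_⟩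
    have h1 : (LinearEquiv.ofInjective i hi)
        ((LinearEquiv.ofInjective i hi).symm
          ((sbar - sH).codRestrict (LinearMap.range i) hDker q)) =
        (sbar - sH).codRestrict (LinearMap.range i) hDker q :=
      (LinearEquiv.ofInjective i hi).apply_symm_apply _
    have h2 := congrArg Subtype.val h1
    rw [LinearEquiv.ofInjective_apply] at h2
    simp only [LinearMap.codRestrict_apply, LinearMap.sub_apply] at h2
    exact h2
  have hδreal : ∀ q, σH (δ (σQ q)) = - δ q := by
    intro q
    apply hi
    calc i (σH (δ (σQ q))) = σE (i (δ (σQ q))) := (hicompat _).symm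
      _ = σE (sbar (σQ q) - sH (σQ q)) := by rw [hiδ]
      _ = sH q - sbar q := by rw [hEsub]; simp only [hsbar, hQinv, hEinv]
      _ = i (-δ q) := by rw [map_neg, hiδ]; abel
  have key_add : ∀ x y, φ (δ (x + y)) = φ (δ x) + φ (δ y) ∧
      ψ (δ (x + y)) = ψ (δ x) + ψ (δ y) := by
    intro x y
    apply hdu _ (hφ _) _ (hψ _) _ (F.add_mem (hφ _) (hφ _)) _ (F.add_mem (hψ _) (hψ _))
    calc φ (δ (x + y)) + σH (ψ (δ (x + y))) = δ (x + y) := (hφψ _).symm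
      _ = δ x + δ y := map_add δ x y
      _ = (φ (δ x) + φ (δ y)) + σH (ψ (δ x) + ψ (δ y)) := by
          rw [hHadd]
          conv_lhs => rw [hφψ (δ x), hφψ (δ y)]
          abel
  have key_smul : ∀ (c : ℂ) q, φ (δ (c • q)) = c • φ (δ q) ∧
      ψ (δ (c • q)) = (starRingEnd ℂ c) • ψ (δ q) := by
    intro c q
    apply hdu _ (hφ _) _ (hψ _) _ (F.smul_mem c (hφ _)) _ (F.smul_mem _ (hψ _))
    calc φ (δ (c • q)) + σH (ψ (δ (c • q))) = δ (c • q) := (hφψ _).symm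
      _ = c • δ q := map_smul δ c q
      _ = c • φ (δ q) + σH ((starRingEnd ℂ c) • ψ (δ q)) := by
          rw [hHsmul]
          conv_lhs => rw [hφψ (δ q)]
          rw [smul_add]
          simp
  have hreal : ∀ q, ψ (δ (σQ q)) = - φ (δ q) ∧ φ (δ (σQ q)) = - ψ (δ q) := by
    intro q
    apply hdu _ (hψ _) _ (hφ _) _ (F.neg_mem (hφ _)) _ (F.neg_mem (hψ _))
    calc ψ (δ (σQ q)) + σH (φ (δ (σQ q)))
        = σH (δ (σQ q)) := by
          conv_rhs => rw [hφψ (δ (σQ q))]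
          rw [hHadd, hHinv]; abel
      _ = - δ q := hδreal q
      _ = -φ (δ q) + σH (-ψ (δ q)) := by
          rw [hHneg]
          conv_lhs => rw [hφψ (δ q)]
          abel
  obtain ⟨s, hs_apply⟩ : ∃ s : Q →ₗ[ℂ] E, ∀ q, s q = sH q + i (φ (δ q)) := by
    refine ⟨sH + i ∘ₗ
      { toFun := fun q => φ (δ q)
        map_add' := fun x y => (key_add x y).1
        map_smul' := fun c x => by simpa using (key_smul c x).1 }, fun q => rfl⟩
  have hrangeker : ∀ h : H, p (i h) = 0 := fun h =>
    LinearMap.mem_ker.mp (hexact ▸ LinearMap.mem_range_self i h)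
  have hsreal : ∀ q, σE (s q) = s (σQ q) := by
    intro q
    have hσsH : σE (sH q) = sH (σQ q) + i (δ (σQ q)) := by
      have h1 := hiδ (σQ q)
      rw [hsbar, hQinv] at h1
      rw [h1]; abel
    have hdec : δ (σQ q) = φ (δ (σQ q)) - σH (φ (δ q)) := by
      conv_lhs => rw [hφψ (δ (σQ q))]
      rw [(hreal q).1, hHneg]
      abel
    rw [hs_apply, hs_apply, hEadd, hσsH, hicompat]
    have h2 : i (δ (σQ q)) + i (σH (φ (δ q))) = i (φ (δ (σQ q))) := by
      rw [← map_add]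
      have h3 : δ (σQ q) + σH (φ (δ q)) = φ (δ (σQ q)) := by
        conv_lhs => rw [hdec]
        abel
      exact congrArg i h3
    rw [add_assoc, h2]
  refine ⟨s, ⟨?_, ?_, ?_⟩, ?_⟩
  · apply LinearMap.ext
    intro q
    rw [LinearMap.comp_apply, hs_apply, map_add, hpsH, hrangeker, add_zero,
      LinearMap.id_apply]
  · intro q
    exact ⟨φ (δ q), hφ _, by rw [hs_apply]; abel⟩
  · exact hsreal
  · rintro t ⟨hpt, htF, htreal⟩
    choose f' hf'F hf' using htF
    have hiβ : ∀ q, i (f' q - φ (δ q)) = t q - s q := by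
      intro q
      rw [map_sub, ← hf' q, hs_apply]
      abel
    have hβ : ∀ q, σH (f' q - φ (δ q)) = f' (σQ q) - φ (δ (σQ q)) := by
      intro q
      apply hi
      rw [← hicompat, hiβ, hiβ, hEsub, htreal, hsreal]
    have hβ0 : ∀ q, f' q - φ (δ q) = 0 := by
      intro q
      have h1 := hβ (σQ q)
      rw [hQinv] at h1
      have h0 : (f' q - φ (δ q)) + σH (-(f' (σQ q) - φ (δ (σQ q)))) = 0 := by
        rw [hHneg, h1]; abel
      exact (huniq _ (F.sub_mem (hf'F q) (hφ _)) _
        (F.neg_mem (F.sub_mem (hf'F (σQ q)) (hφ _))) h0).1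
    apply LinearMap.ext
    intro q
    have h2 := hiβ q
    rw [hβ0 q, map_zero] at h2
    exact sub_eq_zero.mp h2.symm
end
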